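/- Let λ be a peak partition of n with every part at most 3. Then |SPYT(λ)| · ∏_{c ∈ cd(λ)} ĥ_λ(c) = n!, where λ′_i := #{j : λ_j ≥ i} denotes the length of column i of cd(λ), and for a box (i,j) ∈ cd(λ) (column i, row j) one defines ĥ_λ((i,j)) := λ′_1 − j + λ′_2 − j + λ_j if i = 1; ĥ_λ((i,j)) := λ′_1 − j + λ′_2 − j + λ_j − 1 if i = 2; and ĥ_λ((i,j)) := λ′_3 − j + 1 if i = 3. -/

import Mathlib

namespace PaperSPIT

/-- The `j`-th part (1-indexed) of a composition presented as a list. -/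
def part (α : List ℕ) (j : ℕ) : ℕ := α.getD (j - 1) 0

/-- The largest part. -/
def maxPart (α : List ℕ) : ℕ := α.foldr max 0

/-- The composition diagram: boxes `(i, j)` (column `i`, row `j`), both 1-indexed,
rows numbered from bottom to top. -/
def cd (α : List ℕ) : Finset (ℕ × ℕ) :=
  (Finset.Icc 1 (maxPart α) ×ˢ Finset.Icc 1 α.length).filter fun p => p.1 ≤ part α p.2

/-- `α` is a composition of `n`. -/
def IsComposition (n : ℕ) (α : List ℕ) : Prop :=
  (∀ a ∈ α, 0 < a) ∧ α.sum = n

/-- `α` is a peak composition of `n`: all parts except possibly the last are `> 1`. -/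
def IsPeakComposition (n : ℕ) (α : List ℕ) : Prop :=
  IsComposition n α ∧ ∀ i, i + 1 < α.length → 1 < α.getD i 0

/-- A standard filling of `cd α`: a bijection from the boxes onto `{1, …, n}`
(normalized to be `0` off the diagram). -/
def IsStandardFilling (α : List ℕ) (T : ℕ × ℕ → ℕ) : Prop :=
  Set.BijOn T (cd α : Set (ℕ × ℕ)) (Set.Icc 1 α.sum) ∧
  ∀ p : ℕ × ℕ, p ∉ cd α → T p = 0

def RowsIncrease (α : List ℕ) (T : ℕ × ℕ → ℕ) : Prop :=
  ∀ i j : ℕ, (i, j) ∈ cd α → (i + 1, j) ∈ cd α → T (i, j) < T (i + 1, j)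

def RowsWeaklyIncrease (α : List ℕ) (T : ℕ × ℕ → ℕ) : Prop :=
  ∀ i j : ℕ, (i, j) ∈ cd α → (i + 1, j) ∈ cd α → T (i, j) ≤ T (i + 1, j)

def FirstColIncreases (α : List ℕ) (T : ℕ × ℕ → ℕ) : Prop :=
  ∀ j : ℕ, (1, j) ∈ cd α → (1, j + 1) ∈ cd α → T (1, j) < T (1, j + 1)

/-- Standard immaculate tableau. -/
def IsSIT (α : List ℕ) (T : ℕ × ℕ → ℕ) : Prop :=
  IsStandardFilling α T ∧ RowsIncrease α T ∧ FirstColIncreases α T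

/-- Peak-tableau condition: for every `1 ≤ k ≤ n` the boxes with entries `≤ k`
form the diagram of a peak composition. -/
def PeakCond (α : List ℕ) (T : ℕ × ℕ → ℕ) : Prop :=
  ∀ k : ℕ, 1 ≤ k → k ≤ α.sum → ∃ β : List ℕ,
    IsPeakComposition k β ∧ (cd α).filter (fun p => T p ≤ k) = cd β

/-- Standard peak immaculate tableau. -/
def IsSPIT (α : List ℕ) (T : ℕ × ℕ → ℕ) : Prop := IsSIT α T ∧ PeakCond α T

def SPITset (α : List ℕ) : Set (ℕ × ℕ → ℕ) := {T | IsSPIT α T}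

/-- The Young triple condition. -/
def YoungTriple (α : List ℕ) (T : ℕ × ℕ → ℕ) : Prop :=
  ∀ k i j : ℕ, i < j → (k, j) ∈ cd α → (k + 1, i) ∈ cd α → T (k, j) ≤ T (k + 1, i) →
    (k + 1, j) ∈ cd α ∧ T (k + 1, j) < T (k + 1, i)

/-- Standard Young composition tableau. -/
def IsSYCT (α : List ℕ) (T : ℕ × ℕ → ℕ) : Prop :=
  IsStandardFilling α T ∧ RowsIncrease α T ∧ FirstColIncreases α T ∧ YoungTriple α T

def SYCTset (α : List ℕ) : Set (ℕ × ℕ → ℕ) := {T | IsSYCT α T}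

/-- Standard peak Young composition tableau. -/
def IsSPYCT (α : List ℕ) (T : ℕ × ℕ → ℕ) : Prop := IsSYCT α T ∧ PeakCond α T

def SPYCTset (α : List ℕ) : Set (ℕ × ℕ → ℕ) := {T | IsSPYCT α T}

/-- Row reading word `w_r`: rows from top to bottom, each row left to right. -/
def wR (α : List ℕ) (T : ℕ × ℕ → ℕ) : List ℕ :=
  ((List.range α.length).reverse.map fun j =>
    (List.range (part α (j + 1))).map fun i => T (i + 1, j + 1)).flatten

/-- The `i`-th column of a filling, read bottom to top. -/
def colList (α : List ℕ) (T : ℕ × ℕ → ℕ) (i : ℕ) : List ℕ :=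
  ((List.range α.length).filter fun j => decide (i ≤ part α (j + 1))).map
    fun j => T (i, j + 1)

/-- Column reading word `w_c`: columns left to right, each column bottom to top. -/
def wC (α : List ℕ) (T : ℕ × ℕ → ℕ) : List ℕ :=
  ((List.range (maxPart α)).map fun i => colList α T (i + 1)).flatten

/-- Young reading word `w_Y`: first column top to bottom, then subsequent columns
bottom to top, columns left to right. -/
def wY (α : List ℕ) (T : ℕ × ℕ → ℕ) : List ℕ :=
  (colList α T 1).reverse ++
    ((List.range (maxPart α - 1)).map fun i => colList α T (i + 2)).flatten

/-- Descent set of a word with distinct letters: `i` such that `i` and `i+1` occur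
and `i` occurs to the right of `i+1`. -/
def DesWord (w : List ℕ) : Finset ℕ :=
  w.toFinset.filter fun i => (i + 1) ∈ w ∧ w.idxOf (i + 1) < w.idxOf i


/-- Columns increase from bottom to top. -/
def ColsIncrease (l : List ℕ) (T : ℕ × ℕ → ℕ) : Prop :=
  ∀ i j : ℕ, (i, j) ∈ cd l → (i, j + 1) ∈ cd l → T (i, j) < T (i, j + 1)

/-- A standard Young tableau of (partition) shape `l`. -/
def IsSYT (l : List ℕ) (T : ℕ × ℕ → ℕ) : Prop :=
  IsStandardFilling l T ∧ RowsIncrease l T ∧ ColsIncrease l T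

/-- The set of standard peak Young tableaux of shape `l`. -/
def SPYTset (l : List ℕ) : Set (ℕ × ℕ → ℕ) := {T | IsSYT l T ∧ PeakCond l T}

/-- `c_i(l) = λ′_i`: the number of boxes in column `i` of `cd l`. -/
def colLen (l : List ℕ) (i : ℕ) : ℕ := l.countP fun a => decide (i ≤ a)

/-- The hook length `ĥ_λ` of a box of `cd l` (for partitions with parts at most `3`). -/
def hhat (l : List ℕ) (p : ℕ × ℕ) : ℕ :=
  if p.1 = 1 then colLen l 1 - p.2 + (colLen l 2 - p.2) + part l p.2
  else if p.1 = 2 then colLen l 1 - p.2 + (colLen l 2 - p.2) + part l p.2 - 1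
  else colLen l 3 - p.2 + 1


def L (a b c : ℕ) : List ℕ := List.replicate a 3 ++ List.replicate b 2 ++ List.replicate c 1

lemma length_L (a b c : ℕ) : (L a b c).length = a + b + c := by simp [L]; omega

lemma sum_L (a b c : ℕ) : (L a b c).sum = 3*a + 2*b + c := by
  simp [L, List.sum_replicate]; ring

lemma getD_L (a b c k : ℕ) :
    (L a b c).getD k 0 = if k < a then 3 else if k < a + b then 2 else
      if k < a + b + c then 1 else 0 := by
  unfold L
  rcases lt_or_ge k (a+b) with h2 | h2
  · rw [List.getD_append _ _ _ _ (by simp; omega)]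
    rcases lt_or_ge k a with h | h
    · rw [List.getD_append _ _ _ _ (by simp; omega)]
      simp [List.getD_eq_getElem?_getD, h]
    · rw [List.getD_append_right _ _ _ _ (by simp; omega)]
      simp [List.getD_eq_getElem?_getD, show ¬ k < a by omega, show k - a < b by omega, h2]
  · rw [List.getD_append_right _ _ _ _ (by simp; omega)]
    simp only [List.length_append, List.length_replicate]
    rcases lt_or_ge k (a+b+c) with h3 | h3
    · simp [List.getD_eq_getElem?_getD, show ¬ k < a by omega, show ¬ k < a + b by omega, h3,
        show k - (a + b) < c by omega]
    · rw [if_neg (by omega), if_neg (by omega), if_neg (by omega),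
        List.getD_eq_getElem?_getD, List.getElem?_eq_none (by simp; omega)]
      rfl

lemma part_mem {l : List ℕ} {j : ℕ} (h1 : 1 ≤ j) (h2 : j ≤ l.length) : part l j ∈ l := by
  unfold part
  rw [List.getD_eq_getElem _ _ (by omega)]
  exact List.getElem_mem _

lemma le_maxPart {l : List ℕ} {x : ℕ} (h : x ∈ l) : x ≤ maxPart l := by
  unfold maxPart
  induction l with
  | nil => simp at h
  | cons y t ih =>
    rcases List.mem_cons.1 h with rfl | h
    · exact le_max_left _ _
    · exact le_trans (ih h) (le_max_right _ _)

lemma mem_cd {l : List ℕ} {i j : ℕ} :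
    (i, j) ∈ cd l ↔ 1 ≤ i ∧ 1 ≤ j ∧ j ≤ l.length ∧ i ≤ part l j := by
  unfold cd
  simp only [Finset.mem_filter, Finset.mem_product, Finset.mem_Icc]
  constructor
  · rintro ⟨⟨⟨hi1, _⟩, hj1, hj2⟩, hle⟩; exact ⟨hi1, hj1, hj2, hle⟩
  · rintro ⟨hi1, hj1, hj2, hle⟩
    exact ⟨⟨⟨hi1, le_trans hle (le_maxPart (part_mem hj1 hj2))⟩, hj1, hj2⟩, hle⟩

lemma mem_cd_L {a b c i j : ℕ} :
    (i, j) ∈ cd (L a b c) ↔ 1 ≤ i ∧ 1 ≤ j ∧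
      ((j ≤ a ∧ i ≤ 3) ∨ (a < j ∧ j ≤ a + b ∧ i ≤ 2) ∨ (a + b < j ∧ j ≤ a + b + c ∧ i ≤ 1)) := by
  rw [mem_cd, length_L]
  unfold part
  rw [getD_L]
  constructor
  · rintro ⟨hi, hj, hlen, hle⟩
    refine ⟨hi, hj, ?_⟩
    split at hle
    · left; omega
    · split at hle
      · right; left; omega
      · split at hle
        · right; right; omega
        · omega
  · rintro ⟨hi, hj, hcase⟩
    refine ⟨hi, hj, by omega, ?_⟩
    rcases hcase with ⟨h1, h2⟩ | ⟨h1, h2, h3⟩ | ⟨h1, h2, h3⟩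
    · rw [if_pos (by omega)]; omega
    · rw [if_neg (by omega), if_pos (by omega)]; omega
    · rw [if_neg (by omega), if_neg (by omega), if_pos (by omega)]; omega

lemma colLen_L1 (a b c : ℕ) : (L a b c).countP (fun x => decide (1 ≤ x)) = a + b + c := by
  simp [L, List.countP_append, List.countP_replicate]; omega

lemma colLen_L2 (a b c : ℕ) : (L a b c).countP (fun x => decide (2 ≤ x)) = a + b := by
  simp [L, List.countP_append, List.countP_replicate]

lemma colLen_L3 (a b c : ℕ) : (L a b c).countP (fun x => decide (3 ≤ x)) = a := by
  simp [L, List.countP_append, List.countP_replicate]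

lemma cd_erase1 (a b : ℕ) :
    cd (L a b 0) = (cd (L a b 1)).erase (1, a + b + 1) := by
  ext ⟨i, j⟩
  simp only [Finset.mem_erase, mem_cd_L, Prod.mk.injEq, ne_eq, not_and]
  omega

lemma cd_erase2 (a b : ℕ) :
    cd (L a b 1) = (cd (L a (b + 1) 0)).erase (2, a + b + 1) := by
  ext ⟨i, j⟩
  simp only [Finset.mem_erase, mem_cd_L, Prod.mk.injEq, ne_eq, not_and]
  omega

lemma cd_erase3 (a b c : ℕ) :
    cd (L a (b + 1) c) = (cd (L (a + 1) b c)).erase (3, a + 1) := by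
  ext ⟨i, j⟩
  simp only [Finset.mem_erase, mem_cd_L, Prod.mk.injEq, ne_eq, not_and]
  omega

lemma peak_L (a b c : ℕ) (hc : c ≤ 1) : IsPeakComposition (3*a+2*b+c) (L a b c) := by
  refine ⟨⟨?_, sum_L a b c⟩, ?_⟩
  · intro x hx
    simp only [L, List.mem_append, List.mem_replicate] at hx
    omega
  · intro i hi
    rw [length_L] at hi
    rw [getD_L]
    interval_cases c <;> [skip; skip] <;>
      · split <;> [omega; skip]
        split <;> omega

def g : ℕ → ℕ → ℕ → ℕ
  | 0, b, c+1 => g 0 b c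
  | a+1, b, c+1 => g (a+1) b c + g a (b+1) (c+1)
  | a+1, b+1, 0 => g a (b+2) 0 + g (a+1) b 1
  | a+1, 0, 0 => g a 1 0
  | 0, b+1, 0 => g 0 b 1
  | 0, 0, 0 => 1
termination_by a b c => 3*a+2*b+c
decreasing_by all_goals omega

/-- Core restriction bijection. -/
lemma restrict_bijOn (l l' : List ℕ) (p₀ : ℕ × ℕ)
    (hcd : cd l' = (cd l).erase p₀)
    (hsum : l'.sum + 1 = l.sum)
    (hp0 : p₀ ∈ cd l)
    (hc1 : (p₀.1 + 1, p₀.2) ∉ cd l)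
    (hc2 : (p₀.1, p₀.2 + 1) ∉ cd l)
    (hpk : IsPeakComposition l.sum l) :
    Set.BijOn (fun T => Function.update T p₀ 0)
      {T | T ∈ SPYTset l ∧ T p₀ = l.sum} (SPYTset l') := by
  set n := l.sum with hn
  have hmem' : ∀ p : ℕ × ℕ, p ∈ cd l' ↔ p ∈ cd l ∧ p ≠ p₀ := by
    intro p; rw [hcd, Finset.mem_erase]; tauto
  constructor
  · -- MapsTo
    rintro T ⟨⟨⟨⟨hbij, hzero⟩, hrows, hcols⟩, hpeak⟩, hTp0⟩
    have hval : ∀ p : ℕ × ℕ, p ∈ cd l → p ≠ p₀ → 1 ≤ T p ∧ T p ≤ l'.sum := by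
      intro p hp hne
      have h1 := hbij.1 hp
      simp only [Set.mem_Icc] at h1
      refine ⟨h1.1, ?_⟩
      have : T p ≠ n := fun h => hne (hbij.2.1 hp hp0 (h.trans hTp0.symm))
      omega
    have hupd : ∀ p : ℕ × ℕ, p ≠ p₀ → Function.update T p₀ 0 p = T p :=
      fun p hne => Function.update_of_ne hne 0 T
    refine ⟨⟨⟨⟨?_, ?_, ?_⟩, ?_⟩, ?_, ?_⟩, ?_⟩
    · -- MapsTo
      intro p hp
      rw [Finset.mem_coe, hmem' p] at hp
      beta_reduce
      rw [hupd p hp.2]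
      have := hval p hp.1 hp.2
      simp only [Set.mem_Icc]; omega
    · -- InjOn
      intro p hp q hq he
      rw [Finset.mem_coe, hmem' p] at hp
      rw [Finset.mem_coe, hmem' q] at hq
      beta_reduce at he
      rw [hupd p hp.2, hupd q hq.2] at he
      exact hbij.2.1 hp.1 hq.1 he
    · -- SurjOn
      intro m hm
      simp only [Set.mem_Icc] at hm
      have hm' : m ∈ Set.Icc 1 n := by simp only [Set.mem_Icc]; omega
      obtain ⟨p, hp, hTp⟩ := hbij.2.2 hm'
      have hne : p ≠ p₀ := by
        rintro rfl; rw [hTp0] at hTp; omega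
      refine ⟨p, ?_, ?_⟩
      · rw [Finset.mem_coe, hmem' p]; exact ⟨hp, hne⟩
      · beta_reduce; rw [hupd p hne]; exact hTp
    · -- zero off diagram
      intro p hp
      rcases eq_or_ne p p₀ with rfl | hne
      · beta_reduce; simp
      · beta_reduce
        rw [hupd p hne]
        exact hzero p (fun h => hp ((hmem' p).2 ⟨h, hne⟩))
    · -- rows
      intro i j h1 h2
      rw [hmem'] at h1 h2
      beta_reduce
      rw [hupd _ h1.2, hupd _ h2.2]
      exact hrows i j h1.1 h2.1
    · -- cols
      intro i j h1 h2
      rw [hmem'] at h1 h2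
      beta_reduce
      rw [hupd _ h1.2, hupd _ h2.2]
      exact hcols i j h1.1 h2.1
    · -- peak
      intro k hk1 hk2
      obtain ⟨β, hβ, hfil⟩ := hpeak k hk1 (by omega)
      refine ⟨β, hβ, ?_⟩
      rw [← hfil]
      ext p
      simp only [Finset.mem_filter, hmem']
      constructor
      · rintro ⟨⟨hp, hne⟩, hle⟩
        rw [hupd p hne] at hle
        exact ⟨hp, hle⟩
      · rintro ⟨hp, hle⟩
        have hne : p ≠ p₀ := by
          rintro rfl; rw [hTp0] at hle; omega
        rw [hupd p hne]
        exact ⟨⟨hp, hne⟩, hle⟩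
  constructor
  · -- InjOn
    rintro T1 ⟨h1, hT1⟩ T2 ⟨h2, hT2⟩ he
    funext p
    rcases eq_or_ne p p₀ with rfl | hne
    · rw [hT1, hT2]
    · have h := congrFun he p
      beta_reduce at h
      rwa [Function.update_of_ne hne 0 T1, Function.update_of_ne hne 0 T2] at h
  · -- SurjOn
    rintro T' ⟨⟨⟨hbij', hzero'⟩, hrows', hcols'⟩, hpeak'⟩
    have hp0' : p₀ ∉ cd l' := by
      rw [hmem']; tauto
    have hT'p0 : T' p₀ = 0 := hzero' p₀ hp0'
    set T : ℕ × ℕ → ℕ := Function.update T' p₀ n with hT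
    have hupd : ∀ p : ℕ × ℕ, p ≠ p₀ → T p = T' p :=
      fun p hne => Function.update_of_ne hne n T'
    have hTp0 : T p₀ = n := Function.update_self p₀ n T'
    have hval : ∀ p : ℕ × ℕ, p ∈ cd l → p ≠ p₀ → 1 ≤ T p ∧ T p ≤ l'.sum := by
      intro p hp hne
      have hp' : p ∈ cd l' := (hmem' p).2 ⟨hp, hne⟩
      have := hbij'.1 hp'
      simp only [Set.mem_Icc] at this
      rw [hupd p hne]
      exact this
    refine ⟨T, ⟨⟨⟨⟨⟨?_, ?_, ?_⟩, ?_⟩, ?_, ?_⟩, ?_⟩, ?_⟩, ?_⟩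
    · -- MapsTo
      intro p hp
      rcases eq_or_ne p p₀ with rfl | hne
      · rw [hTp0]; simp only [Set.mem_Icc]; omega
      · have := hval p hp hne
        simp only [Set.mem_Icc]; omega
    · -- InjOn
      intro p hp q hq he
      rcases eq_or_ne p p₀ with hep | hnep
      · rcases eq_or_ne q p₀ with heq | hneq
        · rw [hep, heq]
        · exfalso; rw [hep, hTp0] at he
          have := hval q hq hneq
          rw [← he] at this; omega
      · rcases eq_or_ne q p₀ with heq | hneq
        · exfalso; rw [heq, hTp0] at he
          have := hval p hp hnep
          rw [he] at this; omega
        · rw [hupd p hnep, hupd q hneq] at he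
          exact hbij'.2.1 ((hmem' p).2 ⟨hp, hnep⟩) ((hmem' q).2 ⟨hq, hneq⟩) he
    · -- SurjOn
      intro m hm
      simp only [Set.mem_Icc] at hm
      rcases eq_or_lt_of_le hm.2 with rfl | hlt
      · exact ⟨p₀, hp0, hTp0⟩
      · obtain ⟨p, hp, hTp⟩ := hbij'.2.2 (by simp only [Set.mem_Icc]; omega : m ∈ Set.Icc 1 l'.sum)
        rw [Finset.mem_coe, hmem'] at hp
        exact ⟨p, hp.1, by rw [hupd p hp.2]; exact hTp⟩
    · -- zero
      intro p hp
      have hne : p ≠ p₀ := fun h => hp (h ▸ hp0)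
      rw [hupd p hne]
      exact hzero' p (fun h => hp ((hmem' p).1 h).1)
    · -- rows
      intro i j h1 h2
      rcases eq_or_ne ((i+1, j) : ℕ × ℕ) p₀ with he | hne2
      · have hne1 : ((i, j) : ℕ × ℕ) ≠ p₀ := by
          rw [← he]; simp
        rw [← he] at hTp0
        rw [hTp0]
        have := hval (i, j) h1 hne1
        omega
      · rcases eq_or_ne ((i, j) : ℕ × ℕ) p₀ with he | hne1
        · exact absurd (he ▸ h2) hc1
        · rw [hupd _ hne1, hupd _ hne2]
          exact hrows' i j ((hmem' _).2 ⟨h1, hne1⟩) ((hmem' _).2 ⟨h2, hne2⟩)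
    · -- cols
      intro i j h1 h2
      rcases eq_or_ne ((i, j+1) : ℕ × ℕ) p₀ with he | hne2
      · have hne1 : ((i, j) : ℕ × ℕ) ≠ p₀ := by
          rw [← he]; simp
        rw [← he] at hTp0
        rw [hTp0]
        have := hval (i, j) h1 hne1
        omega
      · rcases eq_or_ne ((i, j) : ℕ × ℕ) p₀ with he | hne1
        · exact absurd (he ▸ h2) hc2
        · rw [hupd _ hne1, hupd _ hne2]
          exact hcols' i j ((hmem' _).2 ⟨h1, hne1⟩) ((hmem' _).2 ⟨h2, hne2⟩)
    · -- peak
      intro k hk1 hk2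
      rcases eq_or_lt_of_le hk2 with rfl | hlt
      · refine ⟨l, hpk, ?_⟩
        rw [Finset.filter_true_of_mem]
        intro p hp
        rcases eq_or_ne p p₀ with rfl | hne
        · rw [hTp0]
        · have := hval p hp hne; omega
      · obtain ⟨β, hβ, hfil⟩ := hpeak' k hk1 (by omega)
        refine ⟨β, hβ, ?_⟩
        rw [← hfil]
        ext p
        simp only [Finset.mem_filter, hmem']
        constructor
        · rintro ⟨hp, hle⟩
          have hne : p ≠ p₀ := by
            rintro rfl; rw [hTp0] at hle; omega
          rw [hupd p hne] at hle
          exact ⟨⟨hp, hne⟩, hle⟩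
        · rintro ⟨⟨hp, hne⟩, hle⟩
          rw [hupd p hne]
          exact ⟨hp, hle⟩
    · exact hTp0
    · -- update T p₀ 0 = T'
      funext p
      beta_reduce
      rcases eq_or_ne p p₀ with rfl | hne
      · rw [Function.update_self, hT'p0]
      · rw [Function.update_of_ne hne, hupd p hne]

lemma restrict_ncard (l l' : List ℕ) (p₀ : ℕ × ℕ)
    (hcd : cd l' = (cd l).erase p₀)
    (hsum : l'.sum + 1 = l.sum)
    (hp0 : p₀ ∈ cd l)
    (hc1 : (p₀.1 + 1, p₀.2) ∉ cd l)
    (hc2 : (p₀.1, p₀.2 + 1) ∉ cd l)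
    (hpk : IsPeakComposition l.sum l) :
    {T | T ∈ SPYTset l ∧ T p₀ = l.sum}.ncard = (SPYTset l').ncard := by
  have h := restrict_bijOn l l' p₀ hcd hsum hp0 hc1 hc2 hpk
  rw [← h.image_eq, Set.ncard_image_of_injOn h.injOn]

lemma spyt_finite (l : List ℕ) : (SPYTset l).Finite := by
  rw [← Set.finite_coe_iff]
  have : Finite ({p // p ∈ cd l} → Fin (l.sum + 1)) := by
    exact Pi.finite
  refine Finite.of_injective
    (fun T => fun p : {p // p ∈ cd l} =>
      (⟨T.1 p.1, ?_⟩ : Fin (l.sum + 1))) ?_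
  · have h := T.2.1.1.1.1 (Finset.mem_coe.2 p.2)
    simp only [Set.mem_Icc] at h
    omega
  · intro T1 T2 h
    ext p
    by_cases hp : p ∈ cd l
    · have := congrFun h ⟨p, hp⟩
      simpa using this
    · rw [T1.2.1.1.2 p hp, T2.2.1.1.2 p hp]

lemma max_pos {l : List ℕ} {T : ℕ × ℕ → ℕ} (hT : T ∈ SPYTset l) (hn : 1 ≤ l.sum) :
    ∃ p₀ ∈ cd l, T p₀ = l.sum ∧ (p₀.1 + 1, p₀.2) ∉ cd l ∧ (p₀.1, p₀.2 + 1) ∉ cd l := by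
  obtain ⟨⟨⟨hbij, hzero⟩, hrows, hcols⟩, hpeak⟩ := hT
  obtain ⟨p₀, hp, hTp⟩ := hbij.2.2 (by simp only [Set.mem_Icc]; omega : l.sum ∈ Set.Icc 1 l.sum)
  rw [Finset.mem_coe] at hp
  refine ⟨p₀, hp, hTp, ?_, ?_⟩
  · intro hmem
    have h1 := hrows p₀.1 p₀.2 (by rwa [Prod.mk.eta]) hmem
    have h2 := hbij.1 (Finset.mem_coe.2 hmem)
    simp only [Set.mem_Icc] at h2
    rw [Prod.mk.eta, hTp] at h1
    omega
  · intro hmem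
    have h1 := hcols p₀.1 p₀.2 (by rwa [Prod.mk.eta]) hmem
    have h2 := hbij.1 (Finset.mem_coe.2 hmem)
    simp only [Set.mem_Icc] at h2
    rw [Prod.mk.eta, hTp] at h1
    omega

lemma corner_class {a b c i j : ℕ} (hc : c ≤ 1) (h0 : (i, j) ∈ cd (L a b c))
    (h1 : (i + 1, j) ∉ cd (L a b c)) (h2 : (i, j + 1) ∉ cd (L a b c)) :
    (i = 3 ∧ j = a ∧ 1 ≤ a) ∨ (i = 2 ∧ j = a + b ∧ 1 ≤ b) ∨
      (i = 1 ∧ j = a + b + 1 ∧ c = 1) := by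
  simp only [mem_cd_L] at h0 h1 h2
  obtain ⟨hi, hj, hcase⟩ := h0
  rcases hcase with ⟨u1, u2⟩ | ⟨u1, u2, u3⟩ | ⟨u1, u2, u3⟩
  · left; omega
  · right; left; omega
  · right; right; omega

lemma no_max2 {a b : ℕ} (hb : 1 ≤ b) {T : ℕ × ℕ → ℕ} (hT : T ∈ SPYTset (L a b 1)) :
    T (2, a + b) ≠ (L a b 1).sum := by
  intro hmax
  obtain ⟨⟨⟨hbij, hzero⟩, hrows, hcols⟩, hpeak⟩ := hT
  have hsum : (L a b 1).sum = 3*a + 2*b + 1 := sum_L a b 1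
  set n := (L a b 1).sum with hn
  have hmem2 : (2, a + b) ∈ cd (L a b 1) := by rw [mem_cd_L]; omega
  have hval : ∀ p : ℕ × ℕ, p ∈ cd (L a b 1) → p ≠ (2, a + b) → T p ≤ n - 1 := by
    intro p hp hne
    have h1 := hbij.1 (Finset.mem_coe.2 hp)
    simp only [Set.mem_Icc] at h1
    have : T p ≠ n := fun h =>
      hne (hbij.2.1 (Finset.mem_coe.2 hp) (Finset.mem_coe.2 hmem2) (h.trans hmax.symm))
    omega
  obtain ⟨β, ⟨⟨hβpos, hβsum⟩, hβpeak⟩, hfil⟩ := hpeak (n - 1) (by omega) (by omega)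
  have hm1 : (1, a + b + 1) ∈ cd β := by
    rw [← hfil, Finset.mem_filter]
    have hm : (1, a + b + 1) ∈ cd (L a b 1) := by rw [mem_cd_L]; omega
    exact ⟨hm, hval _ hm (by simp)⟩
  have hm2 : (1, a + b) ∈ cd β := by
    rw [← hfil, Finset.mem_filter]
    have hm : (1, a + b) ∈ cd (L a b 1) := by rw [mem_cd_L]; omega
    exact ⟨hm, hval _ hm (by simp)⟩
  have hm3 : (2, a + b) ∉ cd β := by
    rw [← hfil, Finset.mem_filter]
    rintro ⟨-, hle⟩
    omega
  rw [mem_cd] at hm1 hm2 hm3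
  have hlen : a + b + 1 ≤ β.length := hm1.2.2.1
  have hpart : part β (a + b) ≤ 1 := by
    by_contra h
    exact hm3 ⟨by omega, by omega, by omega, by omega⟩
  have := hβpeak (a + b - 1) (by omega)
  unfold part at hpart
  have he : a + b - 1 = a + b - 1 := rfl
  omega

lemma E_disjoint (l : List ℕ) (p₁ p₂ : ℕ × ℕ) (h1 : p₁ ∈ cd l) (h2 : p₂ ∈ cd l)
    (hne : p₁ ≠ p₂) :
    Disjoint {T | T ∈ SPYTset l ∧ T p₁ = l.sum} {T | T ∈ SPYTset l ∧ T p₂ = l.sum} := by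
  rw [Set.disjoint_left]
  rintro T ⟨hT, e1⟩ ⟨-, e2⟩
  exact hne (hT.1.1.1.2.1 (Finset.mem_coe.2 h1) (Finset.mem_coe.2 h2) (e1.trans e2.symm))

lemma piece1 (a b : ℕ) :
    {T | T ∈ SPYTset (L a b 1) ∧ T (1, a + b + 1) = (L a b 1).sum}.ncard
      = (SPYTset (L a b 0)).ncard := by
  refine restrict_ncard _ _ _ (cd_erase1 a b) ?_ ?_ ?_ ?_ ?_
  · have h1 := sum_L a b 1; have h2 := sum_L a b 0; omega
  · rw [mem_cd_L]; omega
  · rw [mem_cd_L]; omega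
  · rw [mem_cd_L]; omega
  · rw [sum_L]; exact peak_L a b 1 (by omega)

lemma piece2 (a b : ℕ) :
    {T | T ∈ SPYTset (L a (b + 1) 0) ∧ T (2, a + b + 1) = (L a (b + 1) 0).sum}.ncard
      = (SPYTset (L a b 1)).ncard := by
  refine restrict_ncard _ _ _ (cd_erase2 a b) ?_ ?_ ?_ ?_ ?_
  · have h1 := sum_L a (b + 1) 0; have h2 := sum_L a b 1; omega
  · rw [mem_cd_L]; omega
  · rw [mem_cd_L]; omega
  · rw [mem_cd_L]; omega
  · rw [sum_L]; exact peak_L a (b + 1) 0 (by omega)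

lemma piece3 (a b c : ℕ) (hc : c ≤ 1) :
    {T | T ∈ SPYTset (L (a + 1) b c) ∧ T (3, a + 1) = (L (a + 1) b c).sum}.ncard
      = (SPYTset (L a (b + 1) c)).ncard := by
  refine restrict_ncard _ _ _ (cd_erase3 a b c) ?_ ?_ ?_ ?_ ?_
  · have h1 := sum_L (a + 1) b c; have h2 := sum_L a (b + 1) c; omega
  · rw [mem_cd_L]; omega
  · rw [mem_cd_L]; omega
  · rw [mem_cd_L]; omega
  · rw [sum_L]; exact peak_L (a + 1) b c hc

lemma spyt_nil : SPYTset ([] : List ℕ) = {fun _ => 0} := by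
  have hcd : cd ([] : List ℕ) = ∅ := by
    unfold cd
    simp
  ext T
  simp only [Set.mem_singleton_iff]
  constructor
  · rintro ⟨⟨⟨hbij, hzero⟩, -, -⟩, -⟩
    funext p
    exact hzero p (by rw [hcd]; simp)
  · rintro rfl
    refine ⟨⟨⟨⟨?_, ?_, ?_⟩, fun p _ => rfl⟩, ?_, ?_⟩, ?_⟩
    · intro p hp; rw [hcd] at hp; simp at hp
    · intro p hp; rw [hcd] at hp; simp at hp
    · intro m hm
      simp only [List.sum_nil, Set.mem_Icc] at hm
      omega
    · intro i j h; rw [hcd] at h; simp at h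
    · intro i j h; rw [hcd] at h; simp at h
    · intro k hk1 hk2
      simp only [List.sum_nil] at hk2
      omega

lemma g_eq1 : g 0 0 0 = 1 := by simp [g]
lemma g_eq2 (b : ℕ) : g 0 (b+1) 0 = g 0 b 1 := by simp [g]
lemma g_eq3 (a : ℕ) : g (a+1) 0 0 = g a 1 0 := by simp [g]
lemma g_eq4 (a b : ℕ) : g (a+1) (b+1) 0 = g a (b+2) 0 + g (a+1) b 1 := by simp [g]
lemma g_eq5 (b c : ℕ) : g 0 b (c+1) = g 0 b c := by simp [g]
lemma g_eq6 (a b c : ℕ) : g (a+1) b (c+1) = g (a+1) b c + g a (b+1) (c+1) := by simp [g]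

lemma cover1 (a b : ℕ) {T : ℕ × ℕ → ℕ} (hT : T ∈ SPYTset (L a b 1)) :
    T (1, a + b + 1) = (L a b 1).sum ∨ (1 ≤ a ∧ T (3, a) = (L a b 1).sum) := by
  have hs := sum_L a b 1
  obtain ⟨p₀, hp, hTp, hc1, hc2⟩ := max_pos hT (by omega)
  have h0 : (p₀.1, p₀.2) ∈ cd (L a b 1) := by rwa [Prod.mk.eta]
  rcases corner_class (by omega) h0 hc1 hc2 with ⟨e1, e2, e3⟩ | ⟨e1, e2, e3⟩ | ⟨e1, e2, e3⟩
  · right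
    have hpe : p₀ = (3, a) := Prod.ext e1 e2
    exact ⟨e3, by rw [← hpe]; exact hTp⟩
  · exfalso
    have hpe : p₀ = (2, a + b) := Prod.ext e1 e2
    exact no_max2 e3 hT (by rw [← hpe]; exact hTp)
  · left
    have hpe : p₀ = (1, a + b + 1) := Prod.ext e1 e2
    rw [← hpe]; exact hTp

lemma cover0 (a b : ℕ) (hn : 1 ≤ a + b) {T : ℕ × ℕ → ℕ} (hT : T ∈ SPYTset (L a b 0)) :
    (1 ≤ b ∧ T (2, a + b) = (L a b 0).sum) ∨ (1 ≤ a ∧ T (3, a) = (L a b 0).sum) := by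
  have hs := sum_L a b 0
  obtain ⟨p₀, hp, hTp, hc1, hc2⟩ := max_pos hT (by omega)
  have h0 : (p₀.1, p₀.2) ∈ cd (L a b 0) := by rwa [Prod.mk.eta]
  rcases corner_class (by omega) h0 hc1 hc2 with ⟨e1, e2, e3⟩ | ⟨e1, e2, e3⟩ | ⟨e1, e2, e3⟩
  · right
    have hpe : p₀ = (3, a) := Prod.ext e1 e2
    exact ⟨e3, by rw [← hpe]; exact hTp⟩
  · left
    have hpe : p₀ = (2, a + b) := Prod.ext e1 e2
    exact ⟨e3, by rw [← hpe]; exact hTp⟩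
  · exact absurd e3 (by omega)

lemma ncard_split (l : List ℕ) (p₁ p₂ : ℕ × ℕ) (h1 : p₁ ∈ cd l) (h2 : p₂ ∈ cd l)
    (hne : p₁ ≠ p₂) (hcover : ∀ T ∈ SPYTset l, T p₁ = l.sum ∨ T p₂ = l.sum) :
    (SPYTset l).ncard = {T | T ∈ SPYTset l ∧ T p₁ = l.sum}.ncard
      + {T | T ∈ SPYTset l ∧ T p₂ = l.sum}.ncard := by
  have hfin := spyt_finite l
  have hU : SPYTset l = {T | T ∈ SPYTset l ∧ T p₁ = l.sum}
      ∪ {T | T ∈ SPYTset l ∧ T p₂ = l.sum} := by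
    ext T
    constructor
    · intro hT
      rcases hcover T hT with h | h
      · exact Or.inl ⟨hT, h⟩
      · exact Or.inr ⟨hT, h⟩
    · rintro (⟨h, -⟩ | ⟨h, -⟩) <;> exact h
  conv_lhs => rw [hU]
  exact Set.ncard_union_eq (E_disjoint l p₁ p₂ h1 h2 hne)
    (hfin.subset (fun T h => h.1)) (hfin.subset (fun T h => h.1))

lemma ncard_single (l : List ℕ) (p₁ : ℕ × ℕ)
    (hcover : ∀ T ∈ SPYTset l, T p₁ = l.sum) :
    (SPYTset l).ncard = {T | T ∈ SPYTset l ∧ T p₁ = l.sum}.ncard := by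
  congr 1
  ext T
  exact ⟨fun h => ⟨h, hcover T h⟩, fun h => h.1⟩

lemma count_base : (SPYTset (L 0 0 0)).ncard = g 0 0 0 := by
  rw [show L 0 0 0 = ([] : List ℕ) from rfl, spyt_nil, Set.ncard_singleton, g_eq1]

lemma count_L (N : ℕ) : ∀ a b c, 3*a + 2*b + c ≤ N → c ≤ 1 →
    (SPYTset (L a b c)).ncard = g a b c := by
  induction N with
  | zero =>
    intro a b c hle hc
    obtain ⟨rfl, rfl, rfl⟩ : a = 0 ∧ b = 0 ∧ c = 0 := by omega
    exact count_base
  | succ N ih =>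
    intro a b c hle hc
    match a, b, c with
    | 0, 0, 0 => exact count_base
    | 0, b+1, 0 =>
      rw [ncard_single (L 0 (b+1) 0) (2, 0 + b + 1)
        (fun T hT => ((cover0 0 (b+1) (by omega) hT).resolve_right (by omega)).2),
        piece2 0 b, ih 0 b 1 (by omega) (by omega), g_eq2]
    | a+1, 0, 0 =>
      rw [ncard_single (L (a+1) 0 0) (3, a + 1)
        (fun T hT => ((cover0 (a+1) 0 (by omega) hT).resolve_left (by omega)).2),
        piece3 a 0 0 (by omega), ih a 1 0 (by omega) (by omega), g_eq3]
    | a+1, b+1, 0 =>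
      rw [ncard_split (L (a+1) (b+1) 0) (2, a + 1 + b + 1) (3, a + 1)
        (by rw [mem_cd_L]; omega) (by rw [mem_cd_L]; omega)
        (by simp only [ne_eq, Prod.mk.injEq]; omega)
        (fun T hT => (cover0 (a+1) (b+1) (by omega) hT).imp (fun h => h.2) (fun h => h.2)),
        piece2 (a+1) b, piece3 a (b+1) 0 (by omega),
        ih (a+1) b 1 (by omega) (by omega), ih a (b+2) 0 (by omega) (by omega), g_eq4]
      omega
    | 0, b, 1 =>
      rw [ncard_single (L 0 b 1) (1, 0 + b + 1)
        (fun T hT => (cover1 0 b hT).resolve_right (by omega)),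
        piece1 0 b, ih 0 b 0 (by omega) (by omega), g_eq5]
    | a+1, b, 1 =>
      rw [ncard_split (L (a+1) b 1) (1, a + 1 + b + 1) (3, a + 1)
        (by rw [mem_cd_L]; omega) (by rw [mem_cd_L]; omega)
        (by simp only [ne_eq, Prod.mk.injEq]; omega)
        (fun T hT => (cover1 (a+1) b hT).imp id (fun h => h.2)),
        piece1 (a+1) b, piece3 a b 1 (by omega),
        ih (a+1) b 0 (by omega) (by omega), ih a (b+1) 1 (by omega) (by omega), g_eq6]

lemma GI (N : ℕ) : ∀ a b c, 3*a + 2*b + c ≤ N → c ≤ 1 →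
    g a b c * (a.factorial * (2*a + 2*b + c + 1).factorial)
      = (3*a + 2*b + c).factorial * (2*b + c + 1) := by
  induction N with
  | zero =>
    intro a b c hle hc
    obtain ⟨rfl, rfl, rfl⟩ : a = 0 ∧ b = 0 ∧ c = 0 := by omega
    simp [g_eq1]
  | succ N ih =>
    intro a b c hle hc
    match a, b, c with
    | 0, 0, 0 => simp [g_eq1]
    | 0, b+1, 0 =>
      have IH := ih 0 b 1 (by omega) (by omega)
      rw [g_eq2]
      have e1 : 2*0 + 2*(b+1) + 0 + 1 = (2*0 + 2*b + 1 + 1) + 1 := by ring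
      have e2 : 3*0 + 2*(b+1) + 0 = (3*0 + 2*b + 1) + 1 := by ring
      rw [e1, e2, Nat.factorial_succ, Nat.factorial_succ]
      calc g 0 b 1 * (Nat.factorial 0 * ((2*0 + 2*b + 1 + 1 + 1) * (2*0 + 2*b + 1 + 1).factorial))
          = (2*0 + 2*b + 1 + 1 + 1) * (g 0 b 1 * (Nat.factorial 0 * (2*0 + 2*b + 1 + 1).factorial)) := by ring
        _ = (2*0 + 2*b + 1 + 1 + 1) * ((3*0 + 2*b + 1).factorial * (2*b + 1 + 1)) := by rw [IH]
        _ = (3*0 + 2*b + 1 + 1) * (3*0 + 2*b + 1).factorial * (2*(b+1) + 0 + 1) := by ring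
    | a+1, 0, 0 =>
      have IH := ih a 1 0 (by omega) (by omega)
      rw [g_eq3]
      have e1 : 2*(a+1) + 2*0 + 0 + 1 = 2*a + 2*1 + 0 + 1 := by ring
      have e2 : 3*(a+1) + 2*0 + 0 = (3*a + 2*1 + 0) + 1 := by ring
      have e3 : (a+1).factorial = (a+1) * a.factorial := Nat.factorial_succ a
      rw [e1, e2, e3, Nat.factorial_succ]
      calc g a 1 0 * ((a+1) * a.factorial * (2*a + 2*1 + 0 + 1).factorial)
          = (a+1) * (g a 1 0 * (a.factorial * (2*a + 2*1 + 0 + 1).factorial)) := by ring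
        _ = (a+1) * ((3*a + 2*1 + 0).factorial * (2*1 + 0 + 1)) := by rw [IH]
        _ = (3*a + 2*1 + 0 + 1) * (3*a + 2*1 + 0).factorial * (2*0 + 0 + 1) := by ring
    | a+1, b+1, 0 =>
      have IH1 := ih a (b+2) 0 (by omega) (by omega)
      have IH2 := ih (a+1) b 1 (by omega) (by omega)
      rw [g_eq4]
      have e1 : 2*(a+1) + 2*(b+1) + 0 + 1 = (2*a + 2*(b+2) + 0 + 1) := by ring
      have e2 : 2*a + 2*(b+2) + 0 + 1 = (2*(a+1) + 2*b + 1 + 1) + 1 := by ring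
      have e3 : 3*(a+1) + 2*(b+1) + 0 = (3*a + 2*(b+2) + 0) + 1 := by ring
      have e4 : (a+1).factorial = (a+1) * a.factorial := Nat.factorial_succ a
      have e5 : 3*(a+1) + 2*b + 1 = 3*a + 2*(b+2) + 0 := by ring
      rw [e5] at IH2
      have e6 : (2*a + 2*(b+2) + 0 + 1).factorial
          = (2*(a+1) + 2*b + 1 + 1 + 1) * (2*(a+1) + 2*b + 1 + 1).factorial := by
        rw [e2, Nat.factorial_succ]
      rw [e6] at IH1
      rw [e4] at IH2
      rw [e1, e3, e4, e6,
        show (3*a + 2*(b+2) + 0 + 1).factorial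
          = (3*a + 2*(b+2) + 0 + 1) * (3*a + 2*(b+2) + 0).factorial from Nat.factorial_succ _]
      zify at IH1 IH2 ⊢
      linear_combination (a + 1 : ℤ) * IH1 + (2*(a+1) + 2*b + 1 + 1 + 1 : ℤ) * IH2
    | 0, b, 1 =>
      have IH := ih 0 b 0 (by omega) (by omega)
      rw [g_eq5]
      have e1 : 2*0 + 2*b + 1 + 1 = (2*0 + 2*b + 0 + 1) + 1 := by ring
      have e2 : 3*0 + 2*b + 1 = (3*0 + 2*b + 0) + 1 := by ring
      rw [e1, e2, Nat.factorial_succ, Nat.factorial_succ]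
      calc g 0 b 0 * (Nat.factorial 0 * ((2*0 + 2*b + 0 + 1 + 1) * (2*0 + 2*b + 0 + 1).factorial))
          = (2*0 + 2*b + 0 + 1 + 1) * (g 0 b 0 * (Nat.factorial 0 * (2*0 + 2*b + 0 + 1).factorial)) := by ring
        _ = (2*0 + 2*b + 0 + 1 + 1) * ((3*0 + 2*b + 0).factorial * (2*b + 0 + 1)) := by rw [IH]
        _ = (3*0 + 2*b + 0 + 1) * (3*0 + 2*b + 0).factorial * (2*b + 1 + 1) := by ring
    | a+1, b, 1 =>
      have IH1 := ih (a+1) b 0 (by omega) (by omega)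
      have IH2 := ih a (b+1) 1 (by omega) (by omega)
      rw [g_eq6]
      have e4 : (a+1).factorial = (a+1) * a.factorial := Nat.factorial_succ a
      have e5 : 3*a + 2*(b+1) + 1 = 3*(a+1) + 2*b + 0 := by ring
      have e6 : (2*(a+1) + 2*b + 1 + 1).factorial
          = (2*(a+1) + 2*b + 0 + 1 + 1) * (2*(a+1) + 2*b + 0 + 1).factorial := by
        rw [show 2*(a+1) + 2*b + 1 + 1 = (2*(a+1) + 2*b + 0 + 1) + 1 by ring, Nat.factorial_succ]
      have e7 : 2*a + 2*(b+1) + 1 + 1 = 2*(a+1) + 2*b + 1 + 1 := by ring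
      have e8 : 3*(a+1) + 2*b + 1 = (3*(a+1) + 2*b + 0) + 1 := by ring
      rw [e7, e6, e5] at IH2
      rw [e4] at IH1
      rw [e4, e6, e8,
        show (3*(a+1) + 2*b + 0 + 1).factorial
          = (3*(a+1) + 2*b + 0 + 1) * (3*(a+1) + 2*b + 0).factorial from Nat.factorial_succ _]
      zify at IH1 IH2 ⊢
      linear_combination (2*(a+1) + 2*b + 0 + 1 + 1 : ℤ) * IH1 + (a + 1 : ℤ) * IH2

lemma colLen_L1' (a b c : ℕ) : colLen (L a b c) 1 = a + b + c := colLen_L1 a b c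
lemma colLen_L2' (a b c : ℕ) : colLen (L a b c) 2 = a + b := colLen_L2 a b c
lemma colLen_L3' (a b c : ℕ) : colLen (L a b c) 3 = a := colLen_L3 a b c

lemma hhat_11 (a b c : ℕ) : hhat (L (a+1) b c) (1, 1) = 2*a + 2*b + c + 3 := by
  unfold hhat part
  rw [if_pos rfl, colLen_L1', colLen_L2', getD_L, if_pos (by omega)]
  omega

lemma hhat_21 (a b c : ℕ) : hhat (L (a+1) b c) (2, 1) = 2*a + 2*b + c + 2 := by
  unfold hhat part
  rw [if_neg (by norm_num), if_pos rfl, colLen_L1', colLen_L2', getD_L, if_pos (by omega)]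
  omega

lemma hhat_31 (a b c : ℕ) : hhat (L (a+1) b c) (3, 1) = a + 1 := by
  unfold hhat
  rw [if_neg (by norm_num), if_neg (by norm_num), colLen_L3']
  omega

lemma hhat_11' (b c : ℕ) : hhat (L 0 (b+1) c) (1, 1) = 2*b + c + 2 := by
  unfold hhat part
  rw [if_pos rfl, colLen_L1', colLen_L2', getD_L, if_neg (by omega), if_pos (by omega)]
  omega

lemma hhat_21' (b c : ℕ) : hhat (L 0 (b+1) c) (2, 1) = 2*b + c + 1 := by
  unfold hhat part
  rw [if_neg (by norm_num), if_pos rfl, colLen_L1', colLen_L2', getD_L,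
    if_neg (by omega), if_pos (by omega)]
  omega

lemma hhat_shift3 (a b c : ℕ) {p : ℕ × ℕ} (hp : p ∈ cd (L a b c)) :
    hhat (L (a+1) b c) (p.1, p.2 + 1) = hhat (L a b c) p := by
  obtain ⟨i, j⟩ := p
  rw [mem_cd_L] at hp
  unfold hhat part
  dsimp only
  rw [colLen_L1' (a+1), colLen_L1' a, colLen_L2' (a+1), colLen_L2' a,
    colLen_L3' (a+1), colLen_L3' a, getD_L, getD_L]
  simp only [Nat.add_sub_cancel]
  split_ifs <;> omega

lemma hhat_shift2 (b c : ℕ) {p : ℕ × ℕ} (hp : p ∈ cd (L 0 b c)) :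
    hhat (L 0 (b+1) c) (p.1, p.2 + 1) = hhat (L 0 b c) p := by
  obtain ⟨i, j⟩ := p
  rw [mem_cd_L] at hp
  unfold hhat part
  dsimp only
  rw [colLen_L1' 0 (b+1), colLen_L1' 0 b, colLen_L2' 0 (b+1), colLen_L2' 0 b,
    colLen_L3' 0 (b+1), colLen_L3' 0 b, getD_L, getD_L]
  simp only [Nat.add_sub_cancel]
  split_ifs <;> omega

lemma notin_shift (a b c i₀ : ℕ) :
    (i₀, 1) ∉ (cd (L a b c)).image (fun p => (p.1, p.2 + 1)) := by
  intro h
  obtain ⟨p, hp, he⟩ := Finset.mem_image.1 h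
  obtain ⟨x, y⟩ := p
  rw [mem_cd_L] at hp
  rw [Prod.ext_iff] at he
  dsimp only at he
  omega

lemma shift_inj (s : Finset (ℕ × ℕ)) :
    ∀ x ∈ s, ∀ y ∈ s, (fun p : ℕ × ℕ => (p.1, p.2 + 1)) x = (fun p : ℕ × ℕ => (p.1, p.2 + 1)) y
      → x = y := by
  rintro ⟨x1, x2⟩ - ⟨y1, y2⟩ - h
  simp only [Prod.mk.injEq] at h
  simp only [Prod.mk.injEq]
  omega

lemma cd_split3 (a b c : ℕ) :
    cd (L (a+1) b c) = insert (1, 1) (insert (2, 1) (insert (3, 1)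
      ((cd (L a b c)).image (fun p => (p.1, p.2 + 1))))) := by
  ext ⟨i, j⟩
  simp only [Finset.mem_insert, Finset.mem_image, Prod.exists, mem_cd_L, Prod.mk.injEq]
  constructor
  · rintro ⟨hi, hj, hcase⟩
    rcases eq_or_ne j 1 with rfl | hj1
    · have : i = 1 ∨ i = 2 ∨ i = 3 := by omega
      rcases this with rfl | rfl | rfl
      · exact Or.inl ⟨rfl, rfl⟩
      · exact Or.inr (Or.inl ⟨rfl, rfl⟩)
      · exact Or.inr (Or.inr (Or.inl ⟨rfl, rfl⟩))
    · exact Or.inr (Or.inr (Or.inr ⟨i, j - 1, ⟨by omega, by omega, by omega⟩, rfl, by omega⟩))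
  · rintro (⟨rfl, rfl⟩ | ⟨rfl, rfl⟩ | ⟨rfl, rfl⟩ | ⟨x, y, ⟨hx, hy, hcase⟩, he1, he2⟩)
    · exact ⟨by omega, by omega, by omega⟩
    · exact ⟨by omega, by omega, by omega⟩
    · exact ⟨by omega, by omega, by omega⟩
    · exact ⟨by omega, by omega, by omega⟩

lemma cd_split2 (b c : ℕ) (hc : c ≤ 1) :
    cd (L 0 (b+1) c) = insert (1, 1) (insert (2, 1)
      ((cd (L 0 b c)).image (fun p => (p.1, p.2 + 1)))) := by
  ext ⟨i, j⟩
  simp only [Finset.mem_insert, Finset.mem_image, Prod.exists, mem_cd_L, Prod.mk.injEq]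
  constructor
  · rintro ⟨hi, hj, hcase⟩
    rcases eq_or_ne j 1 with rfl | hj1
    · have : i = 1 ∨ i = 2 := by omega
      rcases this with rfl | rfl
      · exact Or.inl ⟨rfl, rfl⟩
      · exact Or.inr (Or.inl ⟨rfl, rfl⟩)
    · exact Or.inr (Or.inr ⟨i, j - 1, ⟨by omega, by omega, by omega⟩, rfl, by omega⟩)
  · rintro (⟨rfl, rfl⟩ | ⟨rfl, rfl⟩ | ⟨x, y, ⟨hx, hy, hcase⟩, he1, he2⟩)
    · exact ⟨by omega, by omega, by omega⟩
    · exact ⟨by omega, by omega, by omega⟩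
    · exact ⟨by omega, by omega, by omega⟩

lemma prod_step3 (a b c : ℕ) :
    ∏ p ∈ cd (L (a+1) b c), hhat (L (a+1) b c) p
      = ((2*a + 2*b + c + 3) * ((2*a + 2*b + c + 2) * (a + 1)))
        * ∏ p ∈ cd (L a b c), hhat (L a b c) p := by
  rw [cd_split3 a b c]
  rw [Finset.prod_insert (by
    simp only [Finset.mem_insert, Prod.mk.injEq]
    push_neg
    exact ⟨by omega, by omega, notin_shift a b c 1⟩)]
  rw [Finset.prod_insert (by
    simp only [Finset.mem_insert, Prod.mk.injEq]
    push_neg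
    exact ⟨by omega, notin_shift a b c 2⟩)]
  rw [Finset.prod_insert (notin_shift a b c 3)]
  rw [Finset.prod_image (shift_inj _)]
  rw [hhat_11, hhat_21, hhat_31]
  rw [Finset.prod_congr rfl (fun p hp => hhat_shift3 a b c hp)]
  ring

lemma prod_step2 (b c : ℕ) (hc : c ≤ 1) :
    ∏ p ∈ cd (L 0 (b+1) c), hhat (L 0 (b+1) c) p
      = ((2*b + c + 2) * (2*b + c + 1)) * ∏ p ∈ cd (L 0 b c), hhat (L 0 b c) p := by
  rw [cd_split2 b c hc]
  rw [Finset.prod_insert (by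
    simp only [Finset.mem_insert, Prod.mk.injEq]
    push_neg
    exact ⟨by omega, notin_shift 0 b c 1⟩)]
  rw [Finset.prod_insert (notin_shift 0 b c 2)]
  rw [Finset.prod_image (shift_inj _)]
  rw [hhat_11', hhat_21']
  rw [Finset.prod_congr rfl (fun p hp => hhat_shift2 b c hp)]
  ring

lemma cd_L000 : cd (L 0 0 0) = ∅ := by
  ext ⟨i, j⟩
  simp only [mem_cd_L, Finset.notMem_empty, iff_false]
  omega

lemma cd_L001 : cd (L 0 0 1) = {(1, 1)} := by
  ext ⟨i, j⟩
  simp only [mem_cd_L, Finset.mem_singleton, Prod.mk.injEq]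
  omega

lemma hhat_001 : hhat (L 0 0 1) (1, 1) = 1 := by
  unfold hhat part
  rw [if_pos rfl, colLen_L1', colLen_L2', getD_L]
  norm_num

lemma Q : ∀ a b c : ℕ, c ≤ 1 →
    (2*b + c + 1) * ∏ p ∈ cd (L a b c), hhat (L a b c) p
      = a.factorial * (2*a + 2*b + c + 1).factorial := by
  intro a
  induction a with
  | zero =>
    intro b
    induction b with
    | zero =>
      intro c hc
      interval_cases c
      · rw [cd_L000]
        simp [Nat.factorial]
      · rw [cd_L001, Finset.prod_singleton, hhat_001]
        first
        | rfl
        | simp [Nat.factorial]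
        | norm_num [Nat.factorial]
    | succ b ihb =>
      intro c hc
      rw [prod_step2 b c hc]
      have IH := ihb c hc
      have e1 : (2*0 + 2*(b+1) + c + 1).factorial
          = (2*b + c + 3) * ((2*b + c + 2) * (2*0 + 2*b + c + 1).factorial) := by
        rw [show 2*0 + 2*(b+1) + c + 1 = (2*0 + 2*b + c + 1 + 1) + 1 by ring,
          Nat.factorial_succ,
          show 2*0 + 2*b + c + 1 + 1 = (2*0 + 2*b + c + 1) + 1 by ring,
          Nat.factorial_succ]
        try ring_nf
      rw [e1]
      zify at IH ⊢
      linear_combination ((2*b + c + 3) * (2*b + c + 2) : ℤ) * IH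
  | succ a iha =>
    intro b c hc
    rw [prod_step3 a b c]
    have IH := iha b c hc
    have e1 : (2*(a+1) + 2*b + c + 1).factorial
        = (2*a + 2*b + c + 3) * ((2*a + 2*b + c + 2) * (2*a + 2*b + c + 1).factorial) := by
      rw [show 2*(a+1) + 2*b + c + 1 = (2*a + 2*b + c + 1 + 1) + 1 by ring,
        Nat.factorial_succ,
        show 2*a + 2*b + c + 1 + 1 = (2*a + 2*b + c + 1) + 1 by ring,
        Nat.factorial_succ]
      try ring_nf
    have e2 : (a+1).factorial = (a+1) * a.factorial := Nat.factorial_succ a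
    rw [e1, e2]
    zify at IH ⊢
    linear_combination ((2*a + 2*b + c + 3) * (2*a + 2*b + c + 2) * (a+1) : ℤ) * IH

lemma decomp : ∀ l : List ℕ, l.Pairwise (· ≥ ·) → (∀ x ∈ l, 0 < x) → (∀ x ∈ l, x ≤ 3) →
    ∃ a b c, l = L a b c := by
  intro l
  induction l with
  | nil => exact fun _ _ _ => ⟨0, 0, 0, rfl⟩
  | cons x t ih =>
    intro hs hpos hle
    obtain ⟨a, b, c, rfl⟩ := ih (List.pairwise_cons.mp hs).2
      (fun y hy => hpos y (List.mem_cons_of_mem _ hy))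
      (fun y hy => hle y (List.mem_cons_of_mem _ hy))
    have hx : 0 < x := hpos x List.mem_cons_self
    have hx3 : x ≤ 3 := hle x List.mem_cons_self
    have hhead : ∀ y ∈ L a b c, y ≤ x := fun y hy => (List.pairwise_cons.mp hs).1 y hy
    have hmem3 : a ≠ 0 → (3 : ℕ) ∈ L a b c := fun h =>
      List.mem_append.mpr (Or.inl (List.mem_append.mpr (Or.inl
        (List.mem_replicate.mpr ⟨h, rfl⟩))))
    have hmem2 : b ≠ 0 → (2 : ℕ) ∈ L a b c := fun h =>
      List.mem_append.mpr (Or.inl (List.mem_append.mpr (Or.inr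
        (List.mem_replicate.mpr ⟨h, rfl⟩))))
    interval_cases x
    · have ha : a = 0 := by
        by_contra h
        have := hhead 3 (hmem3 h); omega
      have hb : b = 0 := by
        by_contra h
        have := hhead 2 (hmem2 h); omega
      subst ha; subst hb
      exact ⟨0, 0, c + 1, by simp [L, List.replicate_succ]⟩
    · have ha : a = 0 := by
        by_contra h
        have := hhead 3 (hmem3 h); omega
      subst ha
      exact ⟨0, b + 1, c, by simp [L, List.replicate_succ]⟩
    · exact ⟨a + 1, b, c, by simp [L, List.replicate_succ]⟩


/-- For a peak partition `l` of `n` with every part at most `3`,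
`|SPYT(l)| · ∏_{c ∈ cd(l)} ĥ_l(c) = n!`. -/
theorem SPYT_hook_length_formula (n : ℕ) (l : List ℕ) (hcomp : IsComposition n l)
    (hsorted : l.Pairwise (· ≥ ·)) (hpeak : IsPeakComposition n l)
    (hparts : ∀ a ∈ l, a ≤ 3) :
    (SPYTset l).ncard * ∏ p ∈ cd l, hhat l p = n.factorial := by
  obtain ⟨hpos, hsum⟩ := hcomp
  obtain ⟨a, b, c, rfl⟩ := decomp l hsorted hpos hparts
  have hc : c ≤ 1 := by
    obtain ⟨-, hpk2⟩ := hpeak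
    by_contra h
    have h2 := hpk2 (a + b) (by rw [length_L]; omega)
    rw [getD_L, if_neg (by omega), if_neg (by omega), if_pos (by omega)] at h2
    omega
  have hn : n = 3*a + 2*b + c := by rw [← hsum, sum_L]
  subst hn
  have hcount := count_L (3*a + 2*b + c) a b c le_rfl hc
  have hq := Q a b c hc
  have hgi := GI (3*a + 2*b + c) a b c le_rfl hc
  have hpos' : 0 < 2*b + c + 1 := by omega
  apply Nat.eq_of_mul_eq_mul_left hpos'
  calc (2*b + c + 1) * ((SPYTset (L a b c)).ncard * ∏ p ∈ cd (L a b c), hhat (L a b c) p)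
      = (SPYTset (L a b c)).ncard
          * ((2*b + c + 1) * ∏ p ∈ cd (L a b c), hhat (L a b c) p) := by ring
    _ = g a b c * ((2*b + c + 1) * ∏ p ∈ cd (L a b c), hhat (L a b c) p) := by rw [hcount]
    _ = g a b c * (a.factorial * (2*a + 2*b + c + 1).factorial) := by rw [hq]
    _ = (3*a + 2*b + c).factorial * (2*b + c + 1) := hgi
    _ = (2*b + c + 1) * (3*a + 2*b + c).factorial := by ring


end PaperSPIT
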